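/- For every natural number m with m ≥ 2 and every real number d, the sum over j from 1 to m−1 of (d − 2 + 2cos(2πj/m)) · (1/(4 sin²(πj/m))) equals (d−2)·(m²−1)/12 + (m² − 6m + 5)/6. -/

import Mathlib

open Real Finset

/-- Abel-type summation by parts for `(1-z) * ∑ f k z^k`. -/
private lemma abelC (f : ℕ → ℂ) (z : ℂ) (n : ℕ) :
    (1 - z) * ∑ k ∈ range n, f k * z ^ k
      = (∑ k ∈ range n, (f (k + 1) - f k) * z ^ (k + 1)) + f 0 - f n * z ^ n := by
  induction n with
  | zero => simp
  | succ n ih =>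
    rw [Finset.sum_range_succ, Finset.sum_range_succ, mul_add, ih]
    ring

private lemma exp_pow_m (m a : ℕ) (hm : 0 < m) :
    Complex.exp (2 * (π : ℂ) * a / m * Complex.I) ^ m = 1 := by
  rw [← Complex.exp_nat_mul]
  have hm' : (m : ℂ) ≠ 0 := Nat.cast_ne_zero.mpr hm.ne'
  have h : (m : ℂ) * (2 * (π : ℂ) * a / m * Complex.I) = (a : ℤ) * (2 * π * Complex.I) := by
    field_simp; push_cast; ring
  rw [h, Complex.exp_int_mul_two_pi_mul_I]

private lemma exp_ne_one (m a : ℕ) (h1 : 1 ≤ a) (h2 : a < m) :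
    Complex.exp (2 * (π : ℂ) * a / m * Complex.I) ≠ 1 := by
  intro h
  obtain ⟨n, hn⟩ := Complex.exp_eq_one_iff.mp h
  have hm0 : 0 < m := by omega
  have hm' : (m : ℂ) ≠ 0 := Nat.cast_ne_zero.mpr hm0.ne'
  have hI : (2 * (π : ℂ) * Complex.I) ≠ 0 := by
    simp [Complex.I_ne_zero, Complex.ofReal_ne_zero, Real.pi_ne_zero]
  have key : ((a : ℂ) / m) = (n : ℂ) := by
    have h2' : (a : ℂ) / m * (2 * (π : ℂ) * Complex.I)
        = (n : ℂ) * (2 * (π : ℂ) * Complex.I) := by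
      rw [← hn]; ring
    exact mul_right_cancel₀ hI h2'
  have keyR : ((a : ℝ) / m) = (n : ℝ) := by
    apply Complex.ofReal_injective
    push_cast
    exact_mod_cast key
  have hm0R : (0 : ℝ) < m := by exact_mod_cast hm0
  have h0 : (0 : ℝ) < (a : ℝ) / m := by
    apply div_pos _ hm0R
    exact_mod_cast h1
  have h1' : (a : ℝ) / m < 1 := by
    rw [div_lt_one hm0R]
    exact_mod_cast h2
  rw [keyR] at h0 h1'
  have hn1 : (1 : ℤ) ≤ n := by exact_mod_cast h0
  have : (1 : ℝ) ≤ (n : ℝ) := by exact_mod_cast hn1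
  linarith

private lemma geom_zero (m : ℕ) (w : ℂ) (hw1 : w ^ m = 1) (hw : w ≠ 1) :
    ∑ j ∈ range m, w ^ j = 0 := by
  have h := geom_sum_mul w m
  rw [hw1, sub_self] at h
  rcases mul_eq_zero.mp h with h | h
  · exact h
  · exact absurd (sub_eq_zero.mp h) hw

/-- Geometric sum over `Icc 1 (m-1)` of a nontrivial `m`-th root of unity is `-1`. -/
private lemma geom_icc (m : ℕ) (hm : 2 ≤ m) (w : ℂ) (hw1 : w ^ m = 1) (hw : w ≠ 1) :
    ∑ j ∈ Icc 1 (m - 1), w ^ j = -1 := by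
  have hIcc : Icc 1 (m - 1) = Ico 1 m := by
    rw [← Finset.Ico_add_one_right_eq_Icc]
    congr 1
    omega
  rw [hIcc, Finset.sum_Ico_eq_sub _ (by omega), geom_zero m w hw1 hw]
  simp

/-- `(1-z)^2 * ∑ k(m-k) z^k = 2 m z` for a nontrivial `m`-th root of unity `z`. -/
private lemma key_poly (m : ℕ) (hm : 2 ≤ m) (z : ℂ) (hz1 : z ^ m = 1) (hz : z ≠ 1) :
    (1 - z) ^ 2 * ∑ k ∈ range m, (k : ℂ) * ((m : ℂ) - k) * z ^ k = 2 * m * z := by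
  have hG : ∑ k ∈ range m, z ^ k = 0 := geom_zero m z hz1 hz
  have h1 : (1 - z) * ∑ k ∈ range m, (k : ℂ) * ((m : ℂ) - k) * z ^ k
      = ∑ k ∈ range m, ((m : ℂ) - 2 * k - 1) * z ^ (k + 1) := by
    rw [abelC (fun k => (k : ℂ) * ((m : ℂ) - k)) z m]
    have e : ∀ k ∈ range m,
        (((k + 1 : ℕ) : ℂ) * ((m : ℂ) - ((k + 1 : ℕ) : ℂ)) - (k : ℂ) * ((m : ℂ) - k))
          * z ^ (k + 1) = ((m : ℂ) - 2 * k - 1) * z ^ (k + 1) := by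
      intro k _; push_cast; ring
    rw [Finset.sum_congr rfl e]
    push_cast
    ring
  have h2 : (1 - z) * ∑ k ∈ range m, ((m : ℂ) - 2 * k - 1) * z ^ k = 2 * m := by
    rw [abelC (fun k => (m : ℂ) - 2 * k - 1) z m]
    have e : ∀ k ∈ range m,
        (((m : ℂ) - 2 * ((k + 1 : ℕ) : ℂ) - 1) - ((m : ℂ) - 2 * (k : ℂ) - 1)) * z ^ (k + 1)
          = (-2 * z) * z ^ k := by
      intro k _; push_cast; ring
    rw [Finset.sum_congr rfl e, ← Finset.mul_sum, hG, hz1]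
    push_cast
    ring
  have hzT : ∑ k ∈ range m, ((m : ℂ) - 2 * k - 1) * z ^ (k + 1)
      = z * ∑ k ∈ range m, ((m : ℂ) - 2 * k - 1) * z ^ k := by
    rw [Finset.mul_sum]
    exact Finset.sum_congr rfl fun k _ => by ring
  calc (1 - z) ^ 2 * ∑ k ∈ range m, (k : ℂ) * ((m : ℂ) - k) * z ^ k
      = (1 - z) * ((1 - z) * ∑ k ∈ range m, (k : ℂ) * ((m : ℂ) - k) * z ^ k) := by ring
    _ = (1 - z) * (z * ∑ k ∈ range m, ((m : ℂ) - 2 * k - 1) * z ^ k) := by rw [h1, hzT]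
    _ = z * ((1 - z) * ∑ k ∈ range m, ((m : ℂ) - 2 * k - 1) * z ^ k) := by ring
    _ = z * (2 * m) := by rw [h2]
    _ = 2 * m * z := by ring

private lemma one_sub_exp_sq (θ : ℝ) :
    (1 - Complex.exp (2 * (θ : ℂ) * Complex.I)) ^ 2
      = -4 * ((Real.sin θ : ℝ) : ℂ) ^ 2 * Complex.exp (2 * (θ : ℂ) * Complex.I) := by
  have ha : Complex.exp (2 * (θ : ℂ) * Complex.I)
      = Complex.exp ((θ : ℂ) * Complex.I) ^ 2 := by
    rw [sq, ← Complex.exp_add]; ring_nf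
  have hsin : ((Real.sin θ : ℝ) : ℂ)
      = (Complex.exp (-(θ : ℂ) * Complex.I) - Complex.exp ((θ : ℂ) * Complex.I))
        * Complex.I / 2 := by
    rw [Complex.ofReal_sin]; rfl
  have hab : Complex.exp (-(θ : ℂ) * Complex.I) * Complex.exp ((θ : ℂ) * Complex.I) = 1 := by
    rw [← Complex.exp_add]
    ring_nf
    exact Complex.exp_zero
  set a := Complex.exp ((θ : ℂ) * Complex.I)
  set b := Complex.exp (-(θ : ℂ) * Complex.I)
  rw [ha, hsin]
  linear_combination (-(1 + b * a - 2 * a ^ 2)) * hab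
    + ((b - a) ^ 2 * a ^ 2) * Complex.I_sq

private lemma sum_id (n : ℕ) : ∑ k ∈ range n, (k : ℂ) = n * (n - 1) / 2 := by
  induction n with
  | zero => simp
  | succ n ih => rw [Finset.sum_range_succ, ih]; push_cast; ring

private lemma sum_sq (n : ℕ) : ∑ k ∈ range n, (k : ℂ) ^ 2 = n * (n - 1) * (2 * n - 1) / 6 := by
  induction n with
  | zero => simp
  | succ n ih => rw [Finset.sum_range_succ, ih]; push_cast; ring

private lemma sum_aux (m : ℕ) :
    ∑ k ∈ range m, (k : ℂ) * ((m : ℂ) - k) = (m : ℂ) * ((m : ℂ) ^ 2 - 1) / 6 := by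
  have h : ∑ k ∈ range m, (k : ℂ) * ((m : ℂ) - k)
      = (m : ℂ) * (∑ k ∈ range m, (k : ℂ)) - ∑ k ∈ range m, (k : ℂ) ^ 2 := by
    rw [Finset.mul_sum, ← Finset.sum_sub_distrib]
    exact Finset.sum_congr rfl fun k _ => by ring
  rw [h, sum_id, sum_sq]
  ring

/-- Pointwise identity: `1/(4 sin²(πj/m))` as a finite Fourier sum. -/
private lemma point (m j : ℕ) (hm : 2 ≤ m) (hj1 : 1 ≤ j) (hj2 : j ≤ m - 1) :
    (1 : ℂ) / (4 * ((Real.sin (π * j / m) : ℝ) : ℂ) ^ 2)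
      = -(1 / (2 * m)) * ∑ k ∈ range m,
          (k : ℂ) * ((m : ℂ) - k) * Complex.exp (2 * (π : ℂ) * j / m * Complex.I) ^ k := by
  have hm0 : 0 < m := by omega
  have hjm : j < m := by omega
  set z := Complex.exp (2 * (π : ℂ) * j / m * Complex.I) with hzdef
  have hz1 : z ^ m = 1 := exp_pow_m m j hm0
  have hzne : z ≠ 1 := exp_ne_one m j hj1 hjm
  have hz0 : z ≠ 0 := Complex.exp_ne_zero _
  have hkey := key_poly m hm z hz1 hzne
  have hθ : (2 : ℂ) * ((π * j / m : ℝ) : ℂ) * Complex.I = 2 * (π : ℂ) * j / m * Complex.I := by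
    push_cast; ring
  have hsq : (1 - z) ^ 2 = -4 * ((Real.sin (π * j / m) : ℝ) : ℂ) ^ 2 * z := by
    have := one_sub_exp_sq (π * j / m)
    rw [hθ] at this
    rw [hzdef]
    exact this
  rw [hsq] at hkey
  -- hkey : -4 * s^2 * z * S = 2 * m * z
  set s : ℂ := ((Real.sin (π * j / m) : ℝ) : ℂ)
  set S := ∑ k ∈ range m, (k : ℂ) * ((m : ℂ) - k) * z ^ k
  have hs0 : s ≠ 0 := by
    have hθpos : 0 < π * j / m := by
      apply div_pos (mul_pos Real.pi_pos (by exact_mod_cast hj1)) (by exact_mod_cast hm0)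
    have hθlt : π * j / m < π := by
      rw [div_lt_iff₀ (by exact_mod_cast hm0)]
      have : (j : ℝ) < m := by exact_mod_cast hjm
      nlinarith [Real.pi_pos]
    have h := Real.sin_pos_of_pos_of_lt_pi hθpos hθlt
    exact Complex.ofReal_ne_zero.mpr h.ne'
  have hm' : (m : ℂ) ≠ 0 := Nat.cast_ne_zero.mpr hm0.ne'
  have hSs : -4 * s ^ 2 * S = 2 * m := by
    have h := hkey
    have : (-4 * s ^ 2 * S) * z = (2 * m) * z := by rw [← h]; ring
    exact mul_right_cancel₀ hz0 this
  clear_value z s S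
  field_simp
  linear_combination -hSs

/-- The key sum: `∑_{j=1}^{m-1} 1/(4 sin²(πj/m)) = (m²-1)/12`, in `ℂ`. -/
private lemma sumC (m : ℕ) (hm : 2 ≤ m) :
    ∑ j ∈ Icc 1 (m - 1), (1 : ℂ) / (4 * ((Real.sin (π * j / m) : ℝ) : ℂ) ^ 2)
      = ((m : ℂ) ^ 2 - 1) / 12 := by
  have hm0 : 0 < m := by omega
  have hm' : (m : ℂ) ≠ 0 := Nat.cast_ne_zero.mpr hm0.ne'
  have hpt : ∀ j ∈ Icc 1 (m - 1),
      (1 : ℂ) / (4 * ((Real.sin (π * j / m) : ℝ) : ℂ) ^ 2)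
        = -(1 / (2 * m)) * ∑ k ∈ range m,
            (k : ℂ) * ((m : ℂ) - k) * Complex.exp (2 * (π : ℂ) * j / m * Complex.I) ^ k := by
    intro j hj
    obtain ⟨h1, h2⟩ := Finset.mem_Icc.mp hj
    exact point m j hm h1 h2
  rw [Finset.sum_congr rfl hpt, ← Finset.mul_sum]
  have hswap : ∀ j k : ℕ, Complex.exp (2 * (π : ℂ) * j / m * Complex.I) ^ k
      = Complex.exp (2 * (π : ℂ) * k / m * Complex.I) ^ j := by
    intro j k
    rw [← Complex.exp_nat_mul, ← Complex.exp_nat_mul]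
    congr 1
    ring
  have hinner : ∑ j ∈ Icc 1 (m - 1), ∑ k ∈ range m,
      (k : ℂ) * ((m : ℂ) - k) * Complex.exp (2 * (π : ℂ) * j / m * Complex.I) ^ k
      = -((m : ℂ) * ((m : ℂ) ^ 2 - 1) / 6) := by
    calc ∑ j ∈ Icc 1 (m - 1), ∑ k ∈ range m,
        (k : ℂ) * ((m : ℂ) - k) * Complex.exp (2 * (π : ℂ) * j / m * Complex.I) ^ k
        = ∑ k ∈ range m, ∑ j ∈ Icc 1 (m - 1),
            (k : ℂ) * ((m : ℂ) - k) * Complex.exp (2 * (π : ℂ) * k / m * Complex.I) ^ j := by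
          rw [Finset.sum_comm]
          exact Finset.sum_congr rfl fun k _ => Finset.sum_congr rfl fun j _ => by rw [hswap]
      _ = ∑ k ∈ range m, -((k : ℂ) * ((m : ℂ) - k)) := by
          apply Finset.sum_congr rfl
          intro k hk
          rw [← Finset.mul_sum]
          rcases Nat.eq_zero_or_pos k with h0 | h1
          · subst h0; simp
          · rw [geom_icc m hm _ (exp_pow_m m k hm0)
              (exp_ne_one m k h1 (Finset.mem_range.mp hk))]
            ring
      _ = -((m : ℂ) * ((m : ℂ) ^ 2 - 1) / 6) := by rw [Finset.sum_neg_distrib, sum_aux]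
  rw [hinner]
  field_simp
  ring

/-- The key sum in `ℝ`. -/
private lemma sumR (m : ℕ) (hm : 2 ≤ m) :
    ∑ j ∈ Icc 1 (m - 1), (1 : ℝ) / (4 * Real.sin (π * j / m) ^ 2)
      = ((m : ℝ) ^ 2 - 1) / 12 := by
  have h := sumC m hm
  apply Complex.ofReal_injective
  rw [Complex.ofReal_sum]
  simp only [Complex.ofReal_div, Complex.ofReal_mul, Complex.ofReal_pow, Complex.ofReal_one,
    Complex.ofReal_ofNat, Complex.ofReal_sub, Complex.ofReal_natCast]
  exact h

/-- Proposition 3.3 (analytic content): for every integer `m ≥ 2` and every real `d`,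
`∑_{j=1}^{m-1} (d − 2 + 2cos(2πj/m)) · (1/(4 sin²(πj/m)))
  = (d−2)(m²−1)/12 + (m² − 6m + 5)/6`. -/
theorem b01_codim_two_sum (m : ℕ) (hm : 2 ≤ m) (d : ℝ) :
    ∑ j ∈ Finset.Icc 1 (m - 1),
        (d - 2 + 2 * Real.cos (2 * π * j / m)) * (1 / (4 * (Real.sin (π * j / m)) ^ 2))
      = (d - 2) * ((m : ℝ) ^ 2 - 1) / 12 + ((m : ℝ) ^ 2 - 6 * m + 5) / 6 := by
  have hm0 : 0 < m := by omega
  have hterm : ∀ j ∈ Icc 1 (m - 1),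
      (d - 2 + 2 * Real.cos (2 * π * j / m)) * (1 / (4 * (Real.sin (π * j / m)) ^ 2))
        = d * (1 / (4 * Real.sin (π * j / m) ^ 2)) - 1 := by
    intro j hj
    obtain ⟨h1, h2⟩ := Finset.mem_Icc.mp hj
    have hjm : j < m := by omega
    have hθpos : 0 < π * j / m := by
      apply div_pos (mul_pos Real.pi_pos (by exact_mod_cast h1)) (by exact_mod_cast hm0)
    have hθlt : π * j / m < π := by
      rw [div_lt_iff₀ (by exact_mod_cast hm0)]
      have : (j : ℝ) < m := by exact_mod_cast hjm
      nlinarith [Real.pi_pos]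
    have hs : Real.sin (π * j / m) ≠ 0 := (Real.sin_pos_of_pos_of_lt_pi hθpos hθlt).ne'
    have hc : Real.cos (2 * π * j / m) = 1 - 2 * Real.sin (π * j / m) ^ 2 := by
      have h2' : 2 * π * (j : ℝ) / m = 2 * (π * j / m) := by ring
      rw [h2', Real.cos_two_mul']
      have := Real.sin_sq_add_cos_sq (π * j / m)
      linarith
    rw [hc]
    field_simp
    ring
  rw [Finset.sum_congr rfl hterm, Finset.sum_sub_distrib, ← Finset.mul_sum, sumR m hm,
    Finset.sum_const, Nat.card_Icc]
  have hcard : ((m - 1 + 1 - 1 : ℕ) : ℝ) = (m : ℝ) - 1 := by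
    have : m - 1 + 1 - 1 = m - 1 := by omega
    rw [this, Nat.cast_sub (by omega)]
    simp
  rw [nsmul_eq_mul, hcard]
  ring
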